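/- Let n ≥ 1. Let Ω = {C ∈ 𝒢_(n)(ℝ) : D_I(C) ≠ 0 for every subset I ⊆ {0,…,n} with |I| ≥ 2}. Then the set 𝒞_{S^n} of positive definite matrices in 𝒢_(n)(ℝ) is a nonempty connected component of Ω. -/

import Mathlib

open Matrix

private lemma myIsHerm_of_symm {m : Type*} [Fintype m] {A : Matrix m m ℝ} (h : A.IsSymm) :
    A.IsHermitian := by
  rw [Matrix.IsHermitian, Matrix.conjTranspose, Matrix.IsSymm] at *
  convert h using 1
  ext i j
  simp

private lemma mySum_inj {l m : Type*} [Fintype l] [Fintype m] [DecidableEq l]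
    (g : l → ℝ) (e : m → l) (he : Function.Injective e)
    (h : ∀ j ∉ Set.range e, g j = 0) : ∑ j, g j = ∑ i, g (e i) := by
  classical
  have h1 : ∑ i : m, g (e i) = ∑ j ∈ Finset.univ.image e, g j :=
    (Finset.sum_image (fun a _ b _ hab => he hab)).symm
  rw [h1]
  refine (Finset.sum_subset (Finset.subset_univ _) fun j _ hj => h j ?_).symm
  intro ⟨i, hi⟩
  exact hj (Finset.mem_image.2 ⟨i, Finset.mem_univ i, hi⟩)

private lemma myPosDef_submatrix {l m : Type*} [Fintype l] [Fintype m] [DecidableEq l]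
    {M : Matrix l l ℝ} (hM : M.PosDef) {e : m → l} (he : Function.Injective e) :
    (M.submatrix e e).PosDef := by
  classical
  refine Matrix.PosDef.of_dotProduct_mulVec_pos ?_ ?_
  · rw [Matrix.IsHermitian, conjTranspose_submatrix, hM.1]
  · intro x hx
    set y : l → ℝ := Function.extend e x (fun _ => (0:ℝ)) with hy
    have hye : ∀ i, y (e i) = x i := fun i => he.extend_apply x (fun _ => (0:ℝ)) i
    have hy0 : ∀ j ∉ Set.range e, y j = 0 := by
      intro j hj
      exact Function.extend_apply' x (fun _ => (0:ℝ)) j (by simpa [Set.range] using hj)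
    have hyne : y ≠ 0 := by
      obtain ⟨i, hi⟩ := Function.ne_iff.mp hx
      exact fun h0 => hi (by rw [← hye i, h0]; rfl)
    have hpos := hM.dotProduct_mulVec_pos hyne
    rw [show star y = y from star_trivial y] at hpos
    have hinner : ∀ j, (M *ᵥ y) j = ∑ i', M j (e i') * x i' := by
      intro j
      show ∑ k, M j k * y k = _
      rw [mySum_inj (fun k => M j k * y k) e he
        (fun k hk => by rw [hy0 k hk, mul_zero])]
      simp [hye]
    have houter : y ⬝ᵥ M *ᵥ y = x ⬝ᵥ (M.submatrix e e) *ᵥ x := by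
      show ∑ j, y j * (M *ᵥ y) j = ∑ i, x i * ((M.submatrix e e) *ᵥ x) i
      rw [mySum_inj (fun j => y j * (M *ᵥ y) j) e he
        (fun j hj => by rw [hy0 j hj, zero_mul])]
      refine Finset.sum_congr rfl fun i _ => ?_
      rw [hye, hinner]
      rfl
    rw [show star x = x from star_trivial x, ← houter]
    exact hpos

private lemma myPosDef_of_psd_det {N : ℕ} {M : Matrix (Fin N) (Fin N) ℝ}
    (hM : M.PosSemidef) (hdet : M.det ≠ 0) : M.PosDef := by
  refine Matrix.PosDef.of_dotProduct_mulVec_pos hM.1 fun x hx => lt_of_le_of_ne (hM.dotProduct_mulVec_nonneg x) fun h0 => ?_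
  have hMx : M *ᵥ x = 0 := (hM.dotProduct_mulVec_zero_iff x).mp h0.symm
  have hU : IsUnit M := (Matrix.isUnit_iff_isUnit_det M).2 (isUnit_iff_ne_zero.2 hdet)
  have hinj := Matrix.mulVec_injective_iff_isUnit.mpr hU
  exact hx (hinj (by rw [hMx, Matrix.mulVec_zero]))

private lemma myPosDef_smul {N : ℕ} {M : Matrix (Fin N) (Fin N) ℝ} {a : ℝ}
    (ha : 0 < a) (hM : M.PosDef) : (a • M).PosDef := by
  refine Matrix.PosDef.of_dotProduct_mulVec_pos ?_ fun x hx => ?_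
  · rw [Matrix.IsHermitian, Matrix.conjTranspose_smul, hM.1, star_trivial]
  · rw [Matrix.smul_mulVec, dotProduct_smul, smul_eq_mul]
    exact mul_pos ha (hM.dotProduct_mulVec_pos hx)

private lemma myContQ (N : ℕ) :
    Continuous (fun p : Matrix (Fin N) (Fin N) ℝ × (Fin N → ℝ) =>
      p.2 ⬝ᵥ p.1 *ᵥ p.2) := by
  simp only [dotProduct, Matrix.mulVec]
  refine continuous_finset_sum _ fun i _ => Continuous.mul ?_ ?_
  · exact (continuous_apply i).comp continuous_snd
  · refine continuous_finset_sum _ fun j _ => Continuous.mul ?_ ?_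
    · exact ((continuous_apply j).comp ((continuous_apply i).comp continuous_fst))
    · exact (continuous_apply j).comp continuous_snd

private lemma myClosedT (N : ℕ) :
    IsClosed {C : Matrix (Fin N) (Fin N) ℝ | ∀ x, 0 ≤ x ⬝ᵥ C *ᵥ x} := by
  have h : {C : Matrix (Fin N) (Fin N) ℝ | ∀ x, 0 ≤ x ⬝ᵥ C *ᵥ x}
      = ⋂ x : Fin N → ℝ, {C | 0 ≤ x ⬝ᵥ C *ᵥ x} := by ext C; simp
  rw [h]
  refine isClosed_iInter fun x => isClosed_le continuous_const ?_
  exact (myContQ N).comp (continuous_id.prodMk continuous_const)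

private lemma myClosedU (N : ℕ) :
    IsClosed {C : Matrix (Fin N) (Fin N) ℝ |
      ∃ x ∈ Metric.sphere (0 : Fin N → ℝ) 1, x ⬝ᵥ C *ᵥ x ≤ 0} := by
  haveI : CompactSpace (Metric.sphere (0 : Fin N → ℝ) 1) :=
    isCompact_iff_compactSpace.mp (isCompact_sphere _ _)
  have hK : IsClosed {p : Matrix (Fin N) (Fin N) ℝ × Metric.sphere (0 : Fin N → ℝ) 1 |
      (p.2 : Fin N → ℝ) ⬝ᵥ p.1 *ᵥ (p.2 : Fin N → ℝ) ≤ 0} := by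
    refine isClosed_le ?_ continuous_const
    exact (myContQ N).comp (continuous_fst.prodMk (continuous_subtype_val.comp continuous_snd))
  have himg := isClosedMap_fst_of_compactSpace _ hK
  convert himg using 1
  ext C
  constructor
  · rintro ⟨x, hx, hle⟩
    exact ⟨(C, ⟨x, hx⟩), hle, rfl⟩
  · rintro ⟨⟨D, x⟩, hle, rfl⟩
    exact ⟨x, x.2, hle⟩



/-- The principal minor `D_I(C)` of a matrix `C` on the rows and columns with
indices in the subset `I ⊆ {0, …, n}`. -/
noncomputable def principalMinor (n : ℕ) (I : Finset (Fin (n + 1)))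
    (C : Matrix (Fin (n + 1)) (Fin (n + 1)) ℝ) : ℝ :=
  (C.submatrix (fun i : I => (i : Fin (n + 1))) (fun i : I => (i : Fin (n + 1)))).det

/-- The set `Ω` of real symmetric matrices with unit diagonal all of whose
principal minors of size `≥ 2` are nonzero. -/
def nondegenerateGram (n : ℕ) : Set (Matrix (Fin (n + 1)) (Fin (n + 1)) ℝ) :=
  {C | C.IsSymm ∧ (∀ j, C j j = 1) ∧
    ∀ I : Finset (Fin (n + 1)), 2 ≤ I.card → principalMinor n I C ≠ 0}

/-- The set `𝒞_{S^n}` of positive definite real symmetric matrices with units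
on the diagonal. -/
def sphericalGram (n : ℕ) : Set (Matrix (Fin (n + 1)) (Fin (n + 1)) ℝ) :=
  {C | C.IsSymm ∧ (∀ j, C j j = 1) ∧ C.PosDef}

private lemma principalMinor_univ (n : ℕ) (C : Matrix (Fin (n + 1)) (Fin (n + 1)) ℝ) :
    principalMinor n Finset.univ C = C.det := by
  unfold principalMinor
  have h := Matrix.det_submatrix_equiv_self
    (n := {x // x ∈ (Finset.univ : Finset (Fin (n+1)))}) (m := Fin (n+1))
    (Equiv.subtypeUnivEquiv (fun x => Finset.mem_univ x)) C
  convert h using 2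
  rfl

private lemma sphericalGram_subset (n : ℕ) :
    sphericalGram n ⊆ nondegenerateGram n := by
  rintro C ⟨hs, hd, hpd⟩
  refine ⟨hs, hd, fun I _ => ?_⟩
  exact (myPosDef_submatrix hpd (fun a b hab => Subtype.ext hab)).det_pos.ne'

/-- For `n ≥ 1`, the set `𝒞_{S^n}` of positive definite
matrices in `𝒢_(n)(ℝ)` is a nonempty connected component of
`Ω = {C ∈ 𝒢_(n)(ℝ) : D_I(C) ≠ 0 for all |I| ≥ 2}`: it is nonempty, contained
in `Ω`, and equals the connected component in `Ω` of each of its points. -/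
theorem spherical_gram_connected_component
    (n : ℕ) (hn : 1 ≤ n) :
    (sphericalGram n).Nonempty ∧
    sphericalGram n ⊆ nondegenerateGram n ∧
    ∀ C ∈ sphericalGram n,
      connectedComponentIn (nondegenerateGram n) C = sphericalGram n := by
  have hsub := sphericalGram_subset n
  refine ⟨⟨1, Matrix.isSymm_one, fun j => Matrix.one_apply_eq j, Matrix.PosDef.one⟩, hsub, ?_⟩
  intro C hC
  -- characterizations of sphericalGram inside nondegenerateGram
  have hST : ∀ P, P ∈ sphericalGram n ↔
      P ∈ nondegenerateGram n ∧ ∀ x : Fin (n+1) → ℝ, 0 ≤ x ⬝ᵥ P *ᵥ x := by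
    intro P
    constructor
    · intro hP
      refine ⟨hsub hP, fun x => ?_⟩
      have := hP.2.2.posSemidef.dotProduct_mulVec_nonneg x
      rwa [star_trivial] at this
    · rintro ⟨hPO, hT⟩
      have hpsd : P.PosSemidef :=
        Matrix.PosSemidef.of_dotProduct_mulVec_nonneg (myIsHerm_of_symm hPO.1) fun x => by rw [star_trivial]; exact hT x
      have hdet : P.det ≠ 0 := by
        have h2 : 2 ≤ (Finset.univ : Finset (Fin (n+1))).card := by
          simp [Finset.card_univ]; omega
        have := hPO.2.2 Finset.univ h2
        rwa [principalMinor_univ] at this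
      exact ⟨hPO.1, hPO.2.1, myPosDef_of_psd_det hpsd hdet⟩
  have hSU : ∀ P, P ∈ sphericalGram n ↔
      P ∈ nondegenerateGram n ∧
        ¬ ∃ x ∈ Metric.sphere (0 : Fin (n+1) → ℝ) 1, x ⬝ᵥ P *ᵥ x ≤ 0 := by
    intro P
    constructor
    · intro hP
      refine ⟨hsub hP, ?_⟩
      rintro ⟨x, hxs, hle⟩
      have hx0 : x ≠ 0 := by
        intro h; rw [h] at hxs
        simp [mem_sphere_zero_iff_norm] at hxs
      have := hP.2.2.dotProduct_mulVec_pos hx0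
      rw [star_trivial] at this
      linarith
    · rintro ⟨hPO, hnU⟩
      refine ⟨hPO.1, hPO.2.1, Matrix.PosDef.of_dotProduct_mulVec_pos (myIsHerm_of_symm hPO.1) fun x hx => ?_⟩
      rw [star_trivial]
      by_contra hle
      push_neg at hle
      have hxn : ‖x‖ ≠ 0 := norm_ne_zero_iff.mpr hx
      have hcpos : (0:ℝ) < ‖x‖⁻¹ := inv_pos.mpr (norm_pos_iff.mpr hx)
      refine hnU ⟨‖x‖⁻¹ • x, ?_, ?_⟩
      · rw [mem_sphere_zero_iff_norm, norm_smul, Real.norm_of_nonneg hcpos.le,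
          inv_mul_cancel₀ hxn]
      · rw [Matrix.mulVec_smul, smul_dotProduct, dotProduct_smul,
          smul_eq_mul, smul_eq_mul]
        exact mul_nonpos_of_nonneg_of_nonpos hcpos.le
          (mul_nonpos_of_nonneg_of_nonpos hcpos.le hle)
  -- sphericalGram is convex, hence preconnected
  have hconv : Convex ℝ (sphericalGram n) := by
    intro A hA B hB a b ha hb hab
    refine ⟨?_, ?_, ?_⟩
    · rw [Matrix.IsSymm, Matrix.transpose_add, Matrix.transpose_smul,
        Matrix.transpose_smul, hA.1, hB.1]
    · intro j
      simp only [Matrix.add_apply, Matrix.smul_apply, hA.2.1 j, hB.2.1 j, smul_eq_mul,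
        mul_one]
      exact hab
    · rcases eq_or_lt_of_le ha with h0 | ha'
      · have hb1 : b = 1 := by linarith
        simpa [← h0, hb1] using hB.2.2
      · rcases eq_or_lt_of_le hb with h0 | hb'
        · have ha1 : a = 1 := by linarith
          simpa [← h0, ha1] using hA.2.2
        · exact (myPosDef_smul ha' hA.2.2).add (myPosDef_smul hb' hB.2.2)
  have hpreS : IsPreconnected (sphericalGram n) := hconv.isPreconnected
  -- the two inclusions
  apply Set.Subset.antisymm
  · -- connectedComponentIn ⊆ sphericalGram
    intro M hM
    by_contra hMS
    have hKΩ : connectedComponentIn (nondegenerateGram n) C ⊆ nondegenerateGram n :=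
      connectedComponentIn_subset _ _
    have hCK : C ∈ connectedComponentIn (nondegenerateGram n) C :=
      mem_connectedComponentIn (hsub hC)
    have hpre : IsPreconnected (connectedComponentIn (nondegenerateGram n) C) :=
      isPreconnected_connectedComponentIn
    set U := {P : Matrix (Fin (n+1)) (Fin (n+1)) ℝ |
      ∃ x ∈ Metric.sphere (0 : Fin (n+1) → ℝ) 1, x ⬝ᵥ P *ᵥ x ≤ 0} with hUdef
    set T := {P : Matrix (Fin (n+1)) (Fin (n+1)) ℝ | ∀ x, 0 ≤ x ⬝ᵥ P *ᵥ x} with hTdef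
    have hcover : connectedComponentIn (nondegenerateGram n) C ⊆ Uᶜ ∪ Tᶜ := by
      intro P hP
      by_cases hPS : P ∈ sphericalGram n
      · exact Or.inl ((hSU P).mp hPS).2
      · exact Or.inr fun hPT => hPS ((hST P).mpr ⟨hKΩ hP, hPT⟩)
    have hne1 : (connectedComponentIn (nondegenerateGram n) C ∩ Uᶜ).Nonempty :=
      ⟨C, hCK, ((hSU C).mp hC).2⟩
    have hne2 : (connectedComponentIn (nondegenerateGram n) C ∩ Tᶜ).Nonempty :=
      ⟨M, hM, fun hMT => hMS ((hST M).mpr ⟨hKΩ hM, hMT⟩)⟩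
    obtain ⟨P, hPK, hPU, hPT⟩ :=
      hpre Uᶜ Tᶜ (myClosedU (n+1)).isOpen_compl (myClosedT (n+1)).isOpen_compl hcover hne1 hne2
    exact hPT (((hST P).mp ((hSU P).mpr ⟨hKΩ hPK, hPU⟩)).2)
  · exact hpreS.subset_connectedComponentIn hC hsub
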